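/- Let m^(1),...,m^(N) be finite distinct multisets over ℝ^d with cardinalities at most M, which are element-wise (r,δ)-separated with r ≥ 1 and 0 < δ ≤ 1. Then there exists a function φ: ℝ^d → {0,1,...,⌈4N³√π⌉} — nonzero on at most N distinct input values — such that the sums S_i = Σ_{k=1}^{|m^(i)|} φ(x_k^(i)) satisfy |S_i| ≤ 4MN³√π for all i, and |S_i − S_j| ≥ 1 whenever m^(i) ≠ m^(j). -/

import Mathlib

open Real

/-- Any finite set of pairwise-distinct finitely-supported functions admits a small
"separating" finite set of points on which they remain pairwise distinct. -/
lemma sep_set_aux {X : Type*} (S : Finset (X →₀ ℕ)) :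
    ∃ A : Finset X, A.card ≤ S.card ∧
      ∀ f ∈ S, ∀ g ∈ S, (∀ a ∈ A, f a = g a) → f = g := by
  classical
  induction S using Finset.induction_on with
  | empty => exact ⟨∅, by simp⟩
  | @insert f s hf ih =>
    obtain ⟨A, hAcard, hA⟩ := ih
    by_cases h : ∃ g ∈ s, ∀ a ∈ A, f a = g a
    · obtain ⟨g, hg, hfg⟩ := h
      have hne : f ≠ g := fun e => hf (e ▸ hg)
      have hx : ∃ x, f x ≠ g x := by
        by_contra hc
        push_neg at hc
        exact hne (Finsupp.ext hc)
      obtain ⟨x, hx⟩ := hx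
      refine ⟨insert x A, ?_, ?_⟩
      · calc (insert x A).card ≤ A.card + 1 := Finset.card_insert_le _ _
          _ ≤ s.card + 1 := by omega
          _ = (insert f s).card := (Finset.card_insert_of_notMem hf).symm
      · intro h1 h1m h2 h2m hag
        have hagA : ∀ a ∈ A, h1 a = h2 a := fun a ha => hag a (Finset.mem_insert_of_mem ha)
        have hagx : h1 x = h2 x := hag x (Finset.mem_insert_self x A)
        rcases Finset.mem_insert.mp h1m with rfl | h1s
        · rcases Finset.mem_insert.mp h2m with rfl | h2s
          · rfl
          · have : g = h2 := hA g hg h2 h2s (fun a ha => (hfg a ha).symm.trans (hagA a ha))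
            exact absurd (this ▸ hagx) hx
        · rcases Finset.mem_insert.mp h2m with rfl | h2s
          · have : g = h1 := hA g hg h1 h1s (fun a ha => (hfg a ha).symm.trans (hagA a ha).symm)
            exact absurd (this ▸ hagx.symm) hx
          · exact hA h1 h1s h2 h2s hagA
    · push_neg at h
      refine ⟨A, le_trans hAcard (by simp [Finset.card_insert_of_notMem hf]), ?_⟩
      intro h1 h1m h2 h2m hag
      rcases Finset.mem_insert.mp h1m with rfl | h1s
      · rcases Finset.mem_insert.mp h2m with rfl | h2s
        · rfl
        · obtain ⟨a, ha, hne⟩ := h h2 h2s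
          exact absurd (hag a ha) hne
      · rcases Finset.mem_insert.mp h2m with rfl | h2s
        · obtain ⟨a, ha, hne⟩ := h h1 h1s
          exact absurd (hag a ha).symm hne
        · exact hA h1 h1s h2 h2s hag

/-- Counting argument: if `N * N ≤ K`, there is a weight function with values in `{0,…,K}`,
supported inside `A`, giving pairwise distinct weighted sums for `N` functions that are
pairwise distinct on `A`. -/
lemma good_weights_aux {X : Type*} (A : Finset X) (K N : ℕ)
    (hK : N * N ≤ K)
    (F : Fin N → X →₀ ℕ)
    (hsepA : ∀ i j : Fin N, i ≠ j → ∃ a ∈ A, F i a ≠ F j a) :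
    ∃ w : X → ℕ, (∀ x, w x ≤ K) ∧ (∀ x ∉ A, w x = 0) ∧
      ∀ i j : Fin N, i ≠ j →
        ∑ a ∈ A, F i a * w a ≠ ∑ a ∈ A, F j a * w a := by
  classical
  set T : Finset (↥A → Fin (K + 1)) := Finset.univ with hT
  have hTcard : T.card = (K + 1) ^ A.card := by
    simp [hT, Fintype.card_fun]
  set pairs : Finset (Fin N × Fin N) := Finset.univ.filter (fun p => p.1 ≠ p.2) with hpairs
  have hpairscard : pairs.card ≤ N * N := by
    calc pairs.card ≤ (Finset.univ : Finset (Fin N × Fin N)).card := Finset.card_filter_le _ _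
      _ = N * N := by simp
  set Bad : Fin N × Fin N → Finset (↥A → Fin (K + 1)) :=
    fun p => T.filter (fun w => ∑ a ∈ A.attach, F p.1 a * (w a : ℕ)
        = ∑ a ∈ A.attach, F p.2 a * (w a : ℕ)) with hBad
  have hBadcard : ∀ p ∈ pairs, (Bad p).card * (K + 1) ≤ (K + 1) ^ A.card := by
    intro p hp
    have hpne : p.1 ≠ p.2 := (Finset.mem_filter.mp hp).2
    obtain ⟨a₀, ha₀, hFa₀⟩ := hsepA p.1 p.2 hpne
    set z : ↥A := ⟨a₀, ha₀⟩ with hz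
    have key : ∀ w ∈ Bad p,
        ∑ a ∈ A.attach, ((F p.1 a : ℤ) - F p.2 a) * ((w a : ℕ) : ℤ) = 0 := by
      intro w hw
      have hw' := (Finset.mem_filter.mp hw).2
      have h1 : (∑ a ∈ A.attach, ((F p.1 a : ℤ) * ((w a : ℕ) : ℤ)))
          = ∑ a ∈ A.attach, ((F p.2 a : ℤ) * ((w a : ℕ) : ℤ)) := by exact_mod_cast hw'
      simp only [sub_mul]
      rw [Finset.sum_sub_distrib, h1, sub_self]
    have hinj : Set.InjOn (fun q : (↥A → Fin (K + 1)) × Fin (K + 1) =>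
        Function.update q.1 z q.2) ↑((Bad p) ×ˢ (Finset.univ : Finset (Fin (K + 1)))) := by
      intro q hq q' hq' heq
      rw [Finset.coe_product] at hq hq'
      have hq1 : q.1 ∈ Bad p := hq.1
      have hq'1 : q'.1 ∈ Bad p := hq'.1
      have hv : q.2 = q'.2 := by
        have := congrFun heq z
        simpa using this
      have hoff : ∀ a : ↥A, a ≠ z → q.1 a = q'.1 a := by
        intro a ha
        have := congrFun heq a
        simpa [Function.update_of_ne ha] using this
      have hdiff : ∑ a ∈ A.attach, ((F p.1 a : ℤ) - F p.2 a)
          * (((q.1 a : ℕ) : ℤ) - ((q'.1 a : ℕ) : ℤ)) = 0 := by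
        simp only [mul_sub]
        rw [Finset.sum_sub_distrib, key _ hq1, key _ hq'1, sub_self]
      have hsingle := Finset.sum_eq_single_of_mem (s := A.attach)
          (f := fun a : ↥A => ((F p.1 a : ℤ) - F p.2 a)
            * (((q.1 a : ℕ) : ℤ) - ((q'.1 a : ℕ) : ℤ)))
          z (Finset.mem_attach A z) (fun a _ ha => by simp only [hoff a ha]; ring)
      have hz0 := hsingle.symm.trans hdiff
      have hc : ((F p.1 a₀ : ℤ) - F p.2 a₀) ≠ 0 :=
        sub_ne_zero.mpr (by exact_mod_cast hFa₀)
      have hzz : q.1 z = q'.1 z := by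
        have h0 := (mul_eq_zero.mp hz0).resolve_left hc
        have : ((q.1 z : ℕ) : ℤ) = ((q'.1 z : ℕ) : ℤ) := by linarith [sub_eq_zero.mp h0]
        exact Fin.ext (by exact_mod_cast this)
      have h1 : q.1 = q'.1 := by
        funext a
        by_cases ha : a = z
        · subst ha; exact hzz
        · exact hoff a ha
      exact Prod.ext h1 hv
    calc (Bad p).card * (K + 1)
        = ((Bad p) ×ˢ (Finset.univ : Finset (Fin (K + 1)))).card := by
          simp [Finset.card_product]
      _ ≤ T.card := Finset.card_le_card_of_injOn _ (fun q hq => Finset.mem_univ _) hinj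
      _ = (K + 1) ^ A.card := hTcard
  have htotal : (pairs.biUnion Bad).card < T.card := by
    have h1 : (pairs.biUnion Bad).card ≤ ∑ p ∈ pairs, (Bad p).card := Finset.card_biUnion_le
    have hpow : 0 < (K + 1) ^ A.card := pow_pos (Nat.succ_pos K) _
    have h3 : (pairs.biUnion Bad).card * (K + 1) < (K + 1) ^ A.card * (K + 1) := by
      calc (pairs.biUnion Bad).card * (K + 1)
          ≤ (∑ p ∈ pairs, (Bad p).card) * (K + 1) := Nat.mul_le_mul_right _ h1
        _ = ∑ p ∈ pairs, (Bad p).card * (K + 1) := Finset.sum_mul _ _ _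
        _ ≤ ∑ p ∈ pairs, (K + 1) ^ A.card := Finset.sum_le_sum hBadcard
        _ = pairs.card * (K + 1) ^ A.card := by rw [Finset.sum_const, smul_eq_mul]
        _ ≤ (N * N) * (K + 1) ^ A.card := Nat.mul_le_mul_right _ hpairscard
        _ ≤ K * (K + 1) ^ A.card := Nat.mul_le_mul_right _ hK
        _ < (K + 1) * (K + 1) ^ A.card :=
            Nat.mul_lt_mul_of_lt_of_le (Nat.lt_succ_self K) le_rfl hpow
        _ = (K + 1) ^ A.card * (K + 1) := Nat.mul_comm _ _
    rw [hTcard]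
    exact Nat.lt_of_mul_lt_mul_right h3
  have hnsub : ¬ (T ⊆ pairs.biUnion Bad) := fun hsub =>
    absurd (Finset.card_le_card hsub) (Nat.not_le.mpr htotal)
  obtain ⟨w₀, _, hw₀⟩ := Finset.not_subset.mp hnsub
  refine ⟨fun x => if h : x ∈ A then (w₀ ⟨x, h⟩ : ℕ) else 0, ?_, ?_, ?_⟩
  · intro x
    by_cases h : x ∈ A
    · simp only [dif_pos h]
      exact Nat.lt_succ_iff.mp (w₀ ⟨x, h⟩).isLt
    · simp [dif_neg h]
  · intro x hx; simp [dif_neg hx]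
  · intro i j hij hEq
    apply hw₀
    apply Finset.mem_biUnion.mpr
    refine ⟨(i, j), by simp [hpairs, hij], ?_⟩
    rw [hBad]
    refine Finset.mem_filter.mpr ⟨Finset.mem_univ _, ?_⟩
    have hsum : ∀ k : Fin N, (∑ a ∈ A, F k a
          * (if h : a ∈ A then (w₀ ⟨a, h⟩ : ℕ) else 0))
        = ∑ a ∈ A.attach, F k a * (w₀ a : ℕ) := by
      intro k
      rw [← Finset.sum_attach A (fun x => F k x
        * (if h : x ∈ A then (w₀ ⟨x, h⟩ : ℕ) else 0))]
      refine Finset.sum_congr rfl (fun a _ => ?_)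
      rw [dif_pos a.2]
    rw [← hsum i, ← hsum j]
    exact hEq

/-- for N distinct finite multisets over ℝ^d with cardinalities ≤ M that are
element-wise (r,δ)-separated (r ≥ 1, 0 < δ ≤ 1), there is a function
φ : ℝ^d → {0,…,⌈4N³√π⌉}, nonzero on at most N values, whose multiset sums
S_i = Σ_x m^(i)(x)·φ(x) satisfy |S_i| ≤ 4MN³√π and |S_i − S_j| ≥ 1 when m^(i) ≠ m^(j). -/
theorem separation_of_multisets
    (d N M : ℕ) (r δ : ℝ) (hr : 1 ≤ r) (hδ0 : 0 < δ) (hδ1 : δ ≤ 1)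
    (m : Fin N → (EuclideanSpace ℝ (Fin d)) →₀ ℕ)
    (hdistinct : Function.Injective m)
    (hcard : ∀ i, ((m i).sum fun _ v => v) ≤ M)
    (hnorm : ∀ i, ∀ x ∈ (m i).support, ‖x‖ ≤ r)
    (hsep : ∀ i j, ∀ x ∈ (m i).support, ∀ y ∈ (m j).support, x = y ∨ δ ≤ ‖x - y‖) :
    ∃ φ : EuclideanSpace ℝ (Fin d) → ℕ,
      (∀ x, φ x ≤ ⌈4 * (N : ℝ) ^ 3 * Real.sqrt π⌉₊) ∧
      {x | φ x ≠ 0}.Finite ∧ {x | φ x ≠ 0}.ncard ≤ N ∧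
      (∀ i, |∑ x ∈ (m i).support, (m i x : ℝ) * φ x|
          ≤ 4 * M * (N : ℝ) ^ 3 * Real.sqrt π) ∧
      (∀ i j, m i ≠ m j →
        1 ≤ |(∑ x ∈ (m i).support, (m i x : ℝ) * φ x)
              - (∑ x ∈ (m j).support, (m j x : ℝ) * φ x)|) := by
  classical
  have hsqrt : (1 : ℝ) ≤ Real.sqrt π := by
    rw [show (1:ℝ) = Real.sqrt 1 by simp]
    exact Real.sqrt_le_sqrt (by linarith [Real.pi_gt_three])
  obtain ⟨A, hAcard, hA⟩ := sep_set_aux (Finset.univ.image m)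
  have hAN : A.card ≤ N :=
    le_trans hAcard (le_trans Finset.card_image_le (by simp))
  have hsepA : ∀ i j : Fin N, i ≠ j → ∃ a ∈ A, m i a ≠ m j a := by
    intro i j hij
    by_contra hc
    push_neg at hc
    exact hij (hdistinct (hA (m i) (Finset.mem_image_of_mem m (Finset.mem_univ i))
      (m j) (Finset.mem_image_of_mem m (Finset.mem_univ j)) hc))
  have hK : N * N ≤ 4 * N ^ 3 := by
    rcases Nat.eq_zero_or_pos N with h | h
    · simp [h]
    · calc N * N ≤ N * N * N := Nat.le_mul_of_pos_right _ h
        _ ≤ 4 * (N * N * N) := Nat.le_mul_of_pos_left _ (by norm_num)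
        _ = 4 * N ^ 3 := by ring
  obtain ⟨w, hwK, hw0, hwsep⟩ := good_weights_aux A (4 * N ^ 3) N hK m hsepA
  have hsum_eq : ∀ i : Fin N,
      ∑ x ∈ (m i).support, m i x * w x = ∑ a ∈ A, m i a * w a := by
    intro i
    have e1 : ∑ x ∈ (m i).support, m i x * w x
        = ∑ x ∈ (m i).support ∪ A, m i x * w x :=
      Finset.sum_subset Finset.subset_union_left (fun x _ hxs => by
        rw [Finsupp.notMem_support_iff.mp hxs, zero_mul])
    have e2 : ∑ x ∈ A, m i x * w x = ∑ x ∈ (m i).support ∪ A, m i x * w x :=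
      Finset.sum_subset Finset.subset_union_right (fun x _ hxA => by
        rw [hw0 x hxA, mul_zero])
    exact e1.trans e2.symm
  have hcast : ∀ i : Fin N, (∑ x ∈ (m i).support, (m i x : ℝ) * (w x : ℝ))
      = ((∑ x ∈ (m i).support, m i x * w x : ℕ) : ℝ) := by
    intro i; push_cast; rfl
  have habs : ∀ a b : ℕ, a ≠ b → (1 : ℝ) ≤ |(a : ℝ) - (b : ℝ)| := by
    intro a b hab
    have h1 : (1 : ℤ) ≤ |(a : ℤ) - b| :=
      Int.one_le_abs (sub_ne_zero.mpr (by exact_mod_cast hab))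
    calc (1 : ℝ) = ((1 : ℤ) : ℝ) := by norm_num
      _ ≤ ((|(a : ℤ) - b| : ℤ) : ℝ) := by exact_mod_cast h1
      _ = |(a : ℝ) - b| := by push_cast; ring
  have hsub : {x | w x ≠ 0} ⊆ (A : Set (EuclideanSpace ℝ (Fin d))) := by
    intro x hx
    by_contra hxA
    exact hx (hw0 x hxA)
  refine ⟨w, ?_, ?_, ?_, ?_, ?_⟩
  · intro x
    have h1 : ((4 * N ^ 3 : ℕ) : ℝ) ≤ 4 * (N : ℝ) ^ 3 * Real.sqrt π := by
      push_cast
      nlinarith [hsqrt, pow_nonneg (Nat.cast_nonneg N : (0:ℝ) ≤ (N:ℝ)) 3]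
    have h2 : (4 * N ^ 3 : ℕ) ≤ ⌈4 * (N : ℝ) ^ 3 * Real.sqrt π⌉₊ := by
      exact_mod_cast le_trans h1 (Nat.le_ceil _)
    exact le_trans (hwK x) h2
  · exact Set.Finite.subset A.finite_toSet hsub
  · have h1 := Set.ncard_le_ncard hsub A.finite_toSet
    rw [Set.ncard_coe_finset] at h1
    exact le_trans h1 hAN
  · intro i
    rw [hcast i, abs_of_nonneg (by positivity)]
    have h1 : (∑ x ∈ (m i).support, m i x * w x) ≤ M * (4 * N ^ 3) := by
      calc ∑ x ∈ (m i).support, m i x * w x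
          ≤ ∑ x ∈ (m i).support, m i x * (4 * N ^ 3) :=
            Finset.sum_le_sum (fun x _ => Nat.mul_le_mul_left _ (hwK x))
        _ = (∑ x ∈ (m i).support, m i x) * (4 * N ^ 3) := (Finset.sum_mul _ _ _).symm
        _ ≤ M * (4 * N ^ 3) := Nat.mul_le_mul_right _ (hcard i)
    calc ((∑ x ∈ (m i).support, m i x * w x : ℕ) : ℝ)
        ≤ ((M * (4 * N ^ 3) : ℕ) : ℝ) := by exact_mod_cast h1
      _ ≤ 4 * M * (N : ℝ) ^ 3 * Real.sqrt π := by
          push_cast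
          nlinarith [hsqrt, mul_nonneg (Nat.cast_nonneg M : (0:ℝ) ≤ (M:ℝ))
            (pow_nonneg (Nat.cast_nonneg N : (0:ℝ) ≤ (N:ℝ)) 3)]
  · intro i j hmij
    have hij : i ≠ j := fun e => hmij (congrArg m e)
    have hne : (∑ x ∈ (m i).support, m i x * w x)
        ≠ ∑ x ∈ (m j).support, m j x * w x := by
      rw [hsum_eq i, hsum_eq j]; exact hwsep i j hij
    rw [hcast i, hcast j]
    exact habs _ _ hne
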